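/- Let Ω be a countable set, G a closed subgroup of S = Sym(Ω), and (Δᵢ)_{i∈I} a family of subsets of Ω. Then either (i) there exists a finite set Γ ⊆ Ω such that every element of G_(Γ) carries Δᵢ to itself for all but finitely many i ∈ I, or (ii) there exists an element g ∈ G with Δᵢg ≠ Δᵢ for infinitely many i ∈ I. Moreover, if all the Δᵢ are finite, then in alternative (i) 'all but finitely many i ∈ I' can be strengthened to 'all i ∈ I'. -/

import Mathlib

open scoped Cardinal ENNReal

universe u

variable {Ω : Type u}

/-- The pointwise stabilizer of a set `s` inside a subgroup `G` of `Sym(Ω)`. -/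
def pstab (G : Subgroup (Equiv.Perm Ω)) (s : Set Ω) : Subgroup (Equiv.Perm Ω) where
  carrier := {g | g ∈ G ∧ ∀ x ∈ s, g x = x}
  one_mem' := ⟨G.one_mem, fun _ _ => rfl⟩
  mul_mem' := by
    rintro a b ⟨haG, ha⟩ ⟨hbG, hb⟩
    refine ⟨G.mul_mem haG hbG, fun x hx => ?_⟩
    simp [Equiv.Perm.mul_apply, hb x hx, ha x hx]
  inv_mem' := by
    rintro a ⟨haG, ha⟩
    refine ⟨G.inv_mem haG, fun x hx => ?_⟩
    conv_lhs => rw [← ha x hx]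
    exact Equiv.symm_apply_apply a x

/-- For a family `A` of subsets of `Ω`, the subgroup of permutations carrying each
member of `A` onto itself. -/
def SAgrp (A : Set (Set Ω)) : Subgroup (Equiv.Perm Ω) where
  carrier := {f | ∀ s ∈ A, (f : Ω → Ω) '' s = s}
  one_mem' := fun s _ => by simp
  mul_mem' := by
    intro a b ha hb s hs
    rw [Equiv.Perm.coe_mul, Set.image_comp, hb s hs, ha s hs]
  inv_mem' := by
    intro a ha s hs
    conv_lhs => rw [← ha s hs]
    rw [← Set.image_comp]
    simp

/-- `G₁ ≼_κ G₂` : there is a set `U` of permutations of cardinality `< κ` with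
`G₁ ≤ ⟨G₂ ∪ U⟩`. -/
def Prec (κ : Cardinal.{u}) (G₁ G₂ : Subgroup (Equiv.Perm Ω)) : Prop :=
  ∃ U : Set (Equiv.Perm Ω), #U < κ ∧
    G₁ ≤ Subgroup.closure ((G₂ : Set (Equiv.Perm Ω)) ∪ U)

/-- `G₁ ≈_κ G₂`. -/
def CApprox (κ : Cardinal.{u}) (G₁ G₂ : Subgroup (Equiv.Perm Ω)) : Prop :=
  Prec κ G₁ G₂ ∧ Prec κ G₂ G₁

/-- `G₁ ≼ G₂` (i.e. `≼_{ℵ₀}`, with `U` finite). -/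
def PrecF (G₁ G₂ : Subgroup (Equiv.Perm Ω)) : Prop :=
  ∃ U : Set (Equiv.Perm Ω), U.Finite ∧
    G₁ ≤ Subgroup.closure ((G₂ : Set (Equiv.Perm Ω)) ∪ U)

/-- `G₁ ≈ G₂` (i.e. `≈_{ℵ₀}`). -/
def ApproxF (G₁ G₂ : Subgroup (Equiv.Perm Ω)) : Prop :=
  PrecF G₁ G₂ ∧ PrecF G₂ G₁

/-- A generalized metric: a `[0,∞]`-valued metric. -/
structure IsGenMetric (d : Ω → Ω → ℝ≥0∞) : Prop where
  eq_zero_iff : ∀ α β, d α β = 0 ↔ α = β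
  symm : ∀ α β, d α β = d β α
  triangle : ∀ α β γ, d α γ ≤ d α β + d β γ

/-- Open ball for a generalized metric. -/
def gball (d : Ω → Ω → ℝ≥0∞) (α : Ω) (r : ℝ≥0∞) : Set Ω := {β | d α β < r}

/-- `(Ω, d)` is `κ`-uncrowded: every ball of finite radius has `< κ` elements. -/
def Uncrowded (κ : Cardinal.{u}) (d : Ω → Ω → ℝ≥0∞) : Prop :=
  ∀ (α : Ω) (r : ℝ≥0∞), r < ⊤ → #(gball d α r) < κ

/-- `(Ω, d)` is uniformly `κ`-uncrowded. -/
def UnifUncrowded (κ : Cardinal.{u}) (d : Ω → Ω → ℝ≥0∞) : Prop :=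
  ∀ r : ℝ≥0∞, r < ⊤ → ∃ lam : Cardinal.{u}, lam < κ ∧ ∀ α : Ω, #(gball d α r) ≤ lam

/-- `g` is bounded with respect to `d` : `‖g‖_d = ⨆ α, d α (αg) < ∞`. -/
def BoundedPerm (d : Ω → Ω → ℝ≥0∞) (g : Equiv.Perm Ω) : Prop :=
  (⨆ α : Ω, d α (g α)) < ⊤

/-- The function topology on `Sym(Ω)`: induced from the product topology on `Ω → Ω`
with `Ω` discrete. -/
def permTop (Ω : Type u) : TopologicalSpace (Equiv.Perm Ω) :=
  TopologicalSpace.induced (fun g : Equiv.Perm Ω => (g : Ω → Ω))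
    (@Pi.topologicalSpace Ω (fun _ => Ω) (fun _ => ⊥))

/-- `G` is closed in `Sym(Ω)` in the function topology. -/
def FTClosed (G : Subgroup (Equiv.Perm Ω)) : Prop :=
  @IsClosed _ (permTop Ω) (G : Set (Equiv.Perm Ω))

/-- `G` is discrete in the function topology. -/
def FTDiscrete (G : Subgroup (Equiv.Perm Ω)) : Prop :=
  @DiscreteTopology G
    (TopologicalSpace.induced (fun x : G => (x : Equiv.Perm Ω)) (permTop Ω))

/-- The orbit of `α` under a subgroup `H ≤ Sym(Ω)`. -/
def orb (H : Subgroup (Equiv.Perm Ω)) (α : Ω) : Set Ω := {β | ∃ g ∈ H, g α = β}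

/-- A partition of `Ω`: a set of disjoint nonempty subsets with union `Ω`. -/
def IsPartition (A : Set (Set Ω)) : Prop :=
  (∀ s ∈ A, s.Nonempty) ∧ A.PairwiseDisjoint id ∧ ⋃₀ A = Set.univ

/-- `A ∈ 𝒫`: a partition of `Ω` into finite subsets of unbounded cardinality. -/
def MemP (A : Set (Set Ω)) : Prop :=
  IsPartition A ∧ (∀ s ∈ A, s.Finite) ∧ ∀ n : ℕ, ∃ s ∈ A, (n : ℕ∞) < s.encard

/-- `A ∈ 𝒬`: a partition of `Ω` with a common finite bound on the cardinalities of
its members, infinitely many of which have more than one element. -/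
def MemQ (A : Set (Set Ω)) : Prop :=
  IsPartition A ∧ (∃ n : ℕ, ∀ s ∈ A, s.encard ≤ (n : ℕ∞)) ∧
    {s | s ∈ A ∧ 1 < s.encard}.Infinite

/-- The subgroup `FN(Ω,d)` of permutations of finite norm with respect to a
generalized metric `d`. -/
def FN (d : Ω → Ω → ℝ≥0∞) (hd : IsGenMetric d) : Subgroup (Equiv.Perm Ω) where
  carrier := {g | (⨆ α : Ω, d α (g α)) < ⊤}
  one_mem' := by
    have h : (⨆ α : Ω, d α ((1 : Equiv.Perm Ω) α)) ≤ 0 :=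
      iSup_le fun α => le_of_eq ((hd.eq_zero_iff α ((1 : Equiv.Perm Ω) α)).2 rfl)
    exact lt_of_le_of_lt h (by simp)
  mul_mem' := by
    intro a b ha hb
    have h : (⨆ α : Ω, d α ((a * b) α)) ≤
        (⨆ α : Ω, d α (b α)) + (⨆ α : Ω, d α (a α)) := by
      refine iSup_le fun α => ?_
      calc d α ((a * b) α) = d α (a (b α)) := by rw [Equiv.Perm.mul_apply]
        _ ≤ d α (b α) + d (b α) (a (b α)) := hd.triangle _ _ _
        _ ≤ _ := add_le_add (le_iSup (fun α : Ω => d α (b α)) α)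
              (le_iSup (fun β : Ω => d β (a β)) (b α))
    exact lt_of_le_of_lt h (ENNReal.add_lt_top.2 ⟨hb, ha⟩)
  inv_mem' := by
    intro a ha
    have h : (⨆ α : Ω, d α (a⁻¹ α)) ≤ ⨆ β : Ω, d β (a β) := by
      refine iSup_le fun α => ?_
      have e : d α (a⁻¹ α) = d (a⁻¹ α) (a (a⁻¹ α)) := by
        rw [show a (a⁻¹ α) = α from a.apply_symm_apply α]; exact hd.symm _ _
      rw [e]
      exact le_iSup (fun β : Ω => d β (a β)) (a⁻¹ α)
    exact lt_of_le_of_lt h ha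

section Stmt18Aux

variable {I : Type*}

lemma mem_pstab {G : Subgroup (Equiv.Perm Ω)} {s : Set Ω} {g : Equiv.Perm Ω} :
    g ∈ pstab G s ↔ g ∈ G ∧ ∀ x ∈ s, g x = x := Iff.rfl

lemma image_ne_iff_witness (g : Equiv.Perm Ω) (s : Set Ω) :
    (g : Ω → Ω) '' s ≠ s ↔ ∃ β, ¬ (β ∈ s ↔ g β ∈ s) := by
  constructor
  · intro h
    by_contra hc
    push_neg at hc
    apply h
    ext y
    constructor
    · rintro ⟨β, hβ, rfl⟩; exact (hc β).1 hβ
    · intro hy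
      exact ⟨g⁻¹ y, (hc (g⁻¹ y)).2 (by simpa using hy), by simp⟩
  · rintro ⟨β, hβ⟩ h
    apply hβ
    constructor
    · intro hb; rw [← h]; exact ⟨β, hb, rfl⟩
    · intro hb
      rw [← h] at hb
      obtain ⟨y, hy, hyg⟩ := hb
      rwa [← g.injective hyg]

lemma mem_of_ftclosed {G : Subgroup (Equiv.Perm Ω)} (hG : FTClosed G) (g : Equiv.Perm Ω)
    (h : ∀ F : Finset Ω, ∃ h ∈ G, ∀ x ∈ F, (h : Equiv.Perm Ω) x = g x) : g ∈ G := by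
  by_contra hg
  have hG' : @IsClosed _ (permTop Ω) (G : Set (Equiv.Perm Ω)) := hG
  have hopen : @IsOpen _ (permTop Ω) ((G : Set (Equiv.Perm Ω))ᶜ) :=
    @IsClosed.isOpen_compl _ (permTop Ω) _ hG'
  rw [permTop] at hopen
  rw [@isOpen_induced_iff _ _ (@Pi.topologicalSpace Ω (fun _ => Ω) (fun _ => ⊥)) _ _] at hopen
  obtain ⟨U, hU, hUeq⟩ := hopen
  have hgU : (g : Ω → Ω) ∈ U := by
    have : g ∈ (fun g : Equiv.Perm Ω => (g : Ω → Ω)) ⁻¹' U := hUeq ▸ hg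
    exact this
  rw [@isOpen_pi_iff Ω (fun _ => Ω) (fun _ => ⊥)] at hU
  obtain ⟨F, u, hFu, hsub⟩ := hU _ hgU
  obtain ⟨h₀, h₀G, h₀g⟩ := h F
  have : (h₀ : Ω → Ω) ∈ (↑F : Set Ω).pi u := by
    intro a ha
    rw [h₀g a ha]
    exact (hFu a ha).2
  have : h₀ ∈ (fun g : Equiv.Perm Ω => (g : Ω → Ω)) ⁻¹' U := hsub this
  rw [hUeq] at this
  exact this h₀G

/-- The one-step relation used in the recursive construction. -/
def StepRel [DecidableEq I] (G : Subgroup (Equiv.Perm Ω)) (Δ : I → Set Ω) (e : ℕ → Ω) (n : ℕ)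
    (s s' : Equiv.Perm Ω × Finset Ω × Finset I) : Prop :=
  s'.1 ∈ G ∧ s.2.1 ⊆ s'.2.1 ∧ (∀ x ∈ s.2.1, s'.1 x = s.1 x) ∧
    e n ∈ s'.2.1 ∧ s'.1⁻¹ (e n) ∈ s'.2.1 ∧
    ∃ i ∉ s.2.2, s'.2.2 = insert i s.2.2 ∧
      ∃ β ∈ s'.2.1, ¬ (β ∈ Δ i ↔ s'.1 β ∈ Δ i)

lemma step_exists [DecidableEq I] (G : Subgroup (Equiv.Perm Ω)) (Δ : I → Set Ω) (e : ℕ → Ω)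
    (hneg : ∀ Γ : Finset Ω,
      {i : I | ∃ h ∈ pstab G (↑Γ : Set Ω), (h : Ω → Ω) '' Δ i ≠ Δ i}.Infinite)
    (n : ℕ) (s : Equiv.Perm Ω × Finset Ω × Finset I) (hs : s.1 ∈ G) :
    ∃ s', StepRel G Δ e n s s' := by
  classical
  obtain ⟨g, Γ, S⟩ := s
  obtain ⟨i, hi, hiS⟩ := (hneg Γ).exists_notMem_finset S
  obtain ⟨h, hh, hmove⟩ := hi
  classical
  set g₂ : Equiv.Perm Ω := if (g : Ω → Ω) '' Δ i = Δ i then g * h else g with hg₂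
  have hg₂G : g₂ ∈ G := by
    rw [hg₂]
    split
    · exact G.mul_mem hs hh.1
    · exact hs
  have hg₂move : (g₂ : Ω → Ω) '' Δ i ≠ Δ i := by
    rw [hg₂]
    split
    · rename_i hfix
      intro hcon
      apply hmove
      apply (Set.image_injective.2 g.injective)
      have hcomp : (g : Ω → Ω) '' ((h : Ω → Ω) '' Δ i) = Δ i := by
        rw [← Set.image_comp, ← Equiv.Perm.coe_mul]
        exact hcon
      rw [hcomp, hfix]
    · rename_i hfix; exact hfix
  have hg₂agree : ∀ x ∈ Γ, g₂ x = g x := by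
    intro x hx
    rw [hg₂]
    split
    · show g (h x) = g x
      rw [hh.2 x hx]
    · rfl
  obtain ⟨β, hβ⟩ := (image_ne_iff_witness g₂ (Δ i)).1 hg₂move
  refine ⟨(g₂, Γ ∪ {e n, g₂⁻¹ (e n), β}, insert i S), hg₂G, Finset.subset_union_left,
    hg₂agree, ?_, ?_, i, hiS, rfl, β, ?_, hβ⟩
  · exact Finset.mem_union_right _ (by simp)
  · exact Finset.mem_union_right _ (by simp)
  · exact Finset.mem_union_right _ (by simp)

lemma stmt18_main {Ω : Type u} {I : Type*} (G : Subgroup (Equiv.Perm Ω))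
    (hG : FTClosed G) (Δ : I → Set Ω) (e : ℕ → Ω) (he : Function.Surjective e)
    (hneg : ∀ Γ : Finset Ω,
      {i : I | ∃ h ∈ pstab G (↑Γ : Set Ω), (h : Ω → Ω) '' Δ i ≠ Δ i}.Infinite) :
    ∃ g ∈ G, {i : I | (g : Ω → Ω) '' Δ i ≠ Δ i}.Infinite := by
  classical
  haveI : DecidableEq I := Classical.decEq I
  -- the sequence of states
  set next : ℕ → (Equiv.Perm Ω × Finset Ω × Finset I) → (Equiv.Perm Ω × Finset Ω × Finset I) :=
    fun n s => if hex : ∃ s', StepRel G Δ e n s s' then hex.choose else s with hnext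
  set seq : ℕ → Equiv.Perm Ω × Finset Ω × Finset I :=
    fun n => Nat.rec (1, ∅, ∅) next n with hseq
  have hseq0 : seq 0 = (1, ∅, ∅) := rfl
  have hseqS : ∀ n, seq (n + 1) = next n (seq n) := fun n => rfl
  have hmem : ∀ n, (seq n).1 ∈ G := by
    intro n
    induction n with
    | zero => exact G.one_mem
    | succ n ih =>
      have hex : ∃ s', StepRel G Δ e n (seq n) s' := step_exists G Δ e hneg n (seq n) ih
      rw [hseqS]
      simp only [hnext]
      rw [dif_pos hex]
      exact hex.choose_spec.1
  have hrel : ∀ n, StepRel G Δ e n (seq n) (seq (n + 1)) := by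
    intro n
    have hex : ∃ s', StepRel G Δ e n (seq n) s' := step_exists G Δ e hneg n (seq n) (hmem n)
    rw [hseqS]
    simp only [hnext]
    rw [dif_pos hex]
    exact hex.choose_spec
  clear_value seq
  clear hnext hseq hseq0 hseqS
  -- basic monotonicity
  have hsub : ∀ n m, n ≤ m → (seq n).2.1 ⊆ (seq m).2.1 := by
    intro n m hnm
    induction m with
    | zero =>
      have hn0 : n = 0 := Nat.le_zero.1 hnm
      subst hn0; exact subset_rfl
    | succ m ih =>
      rcases Nat.lt_or_ge n (m + 1) with hlt | hge
      · exact (ih (Nat.lt_succ_iff.1 hlt)).trans (hrel m).2.1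
      · have : n = m + 1 := le_antisymm hnm hge
        subst this; exact subset_rfl
  have hagree : ∀ n m, n ≤ m → ∀ x ∈ (seq n).2.1, (seq m).1 x = (seq n).1 x := by
    intro n m hnm
    induction m with
    | zero =>
      have : n = 0 := Nat.le_zero.1 hnm
      subst this; intro x _; rfl
    | succ m ih =>
      rcases Nat.lt_or_ge n (m + 1) with hlt | hge
      · intro x hx
        have hnm' : n ≤ m := Nat.lt_succ_iff.1 hlt
        rw [(hrel m).2.2.1 x (hsub n m hnm' hx)]
        exact ih hnm' x hx
      · have : n = m + 1 := le_antisymm hnm hge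
        subst this; intro x _; rfl
  -- the limit function
  set k : Ω → ℕ := fun x => (he x).choose with hk
  have hek : ∀ x, e (k x) = x := fun x => (he x).choose_spec
  have hxk : ∀ x, x ∈ (seq (k x + 1)).2.1 := by
    intro x
    have := (hrel (k x)).2.2.2.1
    rwa [hek] at this
  set f : Ω → Ω := fun x => (seq (k x + 1)).1 x with hf
  have hstab : ∀ x m, k x + 1 ≤ m → (seq m).1 x = f x := by
    intro x m hm
    exact hagree (k x + 1) m hm x (hxk x)
  have hinj : Function.Injective f := by
    intro x y hxy
    set m := max (k x + 1) (k y + 1) with hm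
    have hx := hstab x m (le_max_left _ _)
    have hy := hstab y m (le_max_right _ _)
    have : (seq m).1 x = (seq m).1 y := by rw [hx, hy, hxy]
    exact (seq m).1.injective this
  have hsurj : Function.Surjective f := by
    intro y
    set β : Ω := (seq (k y + 1)).1⁻¹ y with hβ
    have hβmem : β ∈ (seq (k y + 1)).2.1 := by
      have := (hrel (k y)).2.2.2.2.1
      rwa [hek] at this
    refine ⟨β, ?_⟩
    set m := max (k β + 1) (k y + 1) with hm
    have h1 : (seq m).1 β = f β := hstab β m (le_max_left _ _)
    have h2 : (seq m).1 β = (seq (k y + 1)).1 β :=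
      hagree (k y + 1) m (le_max_right _ _) β hβmem
    rw [← h1, h2, hβ]
    exact Equiv.apply_symm_apply _ y
  set gp : Equiv.Perm Ω := Equiv.ofBijective f ⟨hinj, hsurj⟩ with hgp
  have hgpx : ∀ x, gp x = f x := fun x => rfl
  have hgpG : gp ∈ G := by
    apply mem_of_ftclosed hG
    intro F
    set m := F.sup (fun x => k x + 1) with hm
    refine ⟨(seq m).1, hmem m, ?_⟩
    intro x hx
    rw [hgpx, hstab x m (Finset.le_sup (f := fun x => k x + 1) hx)]
  refine ⟨gp, hgpG, ?_⟩
  -- infinitely many indices are moved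
  set idx : ℕ → I := fun n => ((hrel n).2.2.2.2.2).choose with hidx
  have hidxspec : ∀ n, idx n ∉ (seq n).2.2 ∧ (seq (n + 1)).2.2 = insert (idx n) (seq n).2.2 ∧
      ∃ β ∈ (seq (n + 1)).2.1, ¬ (β ∈ Δ (idx n) ↔ (seq (n + 1)).1 β ∈ Δ (idx n)) :=
    fun n => ((hrel n).2.2.2.2.2).choose_spec
  have hSsub : ∀ n m, n ≤ m → (seq n).2.2 ⊆ (seq m).2.2 := by
    intro n m hnm
    induction m with
    | zero =>
      have hn0 : n = 0 := Nat.le_zero.1 hnm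
      subst hn0; exact subset_rfl
    | succ m ih =>
      rcases Nat.lt_or_ge n (m + 1) with hlt | hge
      · refine (ih (Nat.lt_succ_iff.1 hlt)).trans ?_
        rw [(hidxspec m).2.1]
        exact Finset.subset_insert _ _
      · have : n = m + 1 := le_antisymm hnm hge
        subst this; exact subset_rfl
  have hidxmem : ∀ n, idx n ∈ (seq (n + 1)).2.2 := by
    intro n
    rw [(hidxspec n).2.1]
    exact Finset.mem_insert_self _ _
  have hidxinj : Function.Injective idx := by
    intro n m hnm
    by_contra hne
    wlog hlt : n < m generalizing n m
    · exact this hnm.symm (Ne.symm hne) (by omega)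
    · exact (hidxspec m).1 (hnm ▸ hSsub (n + 1) m hlt (hidxmem n))
  apply Set.infinite_of_injective_forall_mem hidxinj
  intro n
  obtain ⟨β, hβmem, hβ⟩ := (hidxspec n).2.2
  rw [Set.mem_setOf_eq, image_ne_iff_witness]
  refine ⟨β, ?_⟩
  have : gp β = (seq (n + 1)).1 β := by
    rw [hgpx]
    set m := max (k β + 1) (n + 1) with hm
    rw [← hstab β m (le_max_left _ _)]
    exact hagree (n + 1) m (le_max_right _ _) β hβmem
  rw [this]
  exact hβ

end Stmt18Aux

/-- Lemma 11.2. -/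
theorem stmt18 {Ω : Type u} [Countable Ω] {I : Type*} (G : Subgroup (Equiv.Perm Ω))
    (hG : FTClosed G) (Δ : I → Set Ω) :
    ((∃ Γ : Set Ω, Γ.Finite ∧
        {i : I | ∃ g ∈ pstab G Γ, (g : Ω → Ω) '' Δ i ≠ Δ i}.Finite) ∨
      (∃ g ∈ G, {i : I | (g : Ω → Ω) '' Δ i ≠ Δ i}.Infinite)) ∧
    ((∀ i, (Δ i).Finite) →
      ((∃ Γ : Set Ω, Γ.Finite ∧
          ∀ g ∈ pstab G Γ, ∀ i : I, (g : Ω → Ω) '' Δ i = Δ i) ∨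
        (∃ g ∈ G, {i : I | (g : Ω → Ω) '' Δ i ≠ Δ i}.Infinite))) := by
  classical
  have part1 : (∃ Γ : Set Ω, Γ.Finite ∧
        {i : I | ∃ g ∈ pstab G Γ, (g : Ω → Ω) '' Δ i ≠ Δ i}.Finite) ∨
      (∃ g ∈ G, {i : I | (g : Ω → Ω) '' Δ i ≠ Δ i}.Infinite) := by
    by_cases hcase : ∃ Γ : Set Ω, Γ.Finite ∧
        {i : I | ∃ g ∈ pstab G Γ, (g : Ω → Ω) '' Δ i ≠ Δ i}.Finite
    · exact Or.inl hcase
    · right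
      push_neg at hcase
      cases isEmpty_or_nonempty Ω with
      | inl hempty =>
        exfalso
        refine hcase ∅ Set.finite_empty ?_
        convert Set.finite_empty
        ext i
        simp only [Set.mem_setOf_eq, Set.mem_empty_iff_false, iff_false, not_exists]
        intro g hg
        exact hg.2 (by ext x; exact isEmptyElim x)
      | inr hne =>
        obtain ⟨e, he⟩ := exists_surjective_nat Ω
        exact stmt18_main G hG Δ e he fun Γ => hcase ↑Γ Γ.finite_toSet
  refine ⟨part1, fun hΔ => ?_⟩
  rcases part1 with ⟨Γ, hΓ, hE⟩ | h2
  · left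
    refine ⟨Γ ∪ ⋃ i ∈ {i : I | ∃ g ∈ pstab G Γ, (g : Ω → Ω) '' Δ i ≠ Δ i}, Δ i,
      hΓ.union (hE.biUnion fun i _ => hΔ i), ?_⟩
    intro g hg i
    by_cases hi : i ∈ {i : I | ∃ g ∈ pstab G Γ, (g : Ω → Ω) '' Δ i ≠ Δ i}
    · have hfix : ∀ x ∈ Δ i, g x = x := fun x hx =>
        hg.2 x (Set.mem_union_right _ (Set.mem_biUnion hi hx))
      ext y
      constructor
      · rintro ⟨x, hx, rfl⟩; rwa [hfix x hx]
      · intro hy; exact ⟨y, hy, hfix y hy⟩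
    · by_contra hcon
      exact hi ⟨g, ⟨hg.1, fun x hx => hg.2 x (Set.mem_union_left _ hx)⟩, hcon⟩
  · exact Or.inr h2
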